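/- Under joint symmetry of the density f(q,s) = f(1-q,1-s), if B₁ and B₂ are both symmetric grading schemes and α_m = α_d, then E[h(q,B₁(s))] = E[h(q,B₂(s))]; i.e., all symmetric grading schemes have equal performance when the motivation and demotivation coefficients are equal. -/

import Mathlib

open MeasureTheory Set

/-- (De)motivation function: quality change of a student with true quality `q`
receiving grade `g`. -/
noncomputable def motiv (αm αd q g : ℝ) : ℝ :=
  if q ≤ g then αm * (g - q) else -(αd * (q - g))

lemma motiv_eq (α q g : ℝ) : motiv α α q g = α * (g - q) := by
  unfold motiv; split <;> ring

theorem equal_perf_of_eq_coeffs (αm αd : ℝ) (hαm : 0 ≤ αm) (hαd : 0 ≤ αd)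
    (heq : αm = αd)
    (f : ℝ → ℝ → ℝ) (B₁ B₂ : ℝ → ℝ)
    (hf0 : ∀ q ∈ Icc (0 : ℝ) 1, ∀ s ∈ Icc (0 : ℝ) 1, 0 ≤ f q s)
    (hfsymm : ∀ q ∈ Icc (0 : ℝ) 1, ∀ s ∈ Icc (0 : ℝ) 1, f q s = f (1 - q) (1 - s))
    (hB₁range : ∀ s ∈ Icc (0 : ℝ) 1, B₁ s ∈ Icc (0 : ℝ) 1)
    (hB₂range : ∀ s ∈ Icc (0 : ℝ) 1, B₂ s ∈ Icc (0 : ℝ) 1)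
    (hB₁symm : ∀ s ∈ Icc (0 : ℝ) 1, B₁ (1 - s) = 1 - B₁ s)
    (hB₂symm : ∀ s ∈ Icc (0 : ℝ) 1, B₂ (1 - s) = 1 - B₂ s)
    (hint1 : IntegrableOn (fun p : ℝ × ℝ => f p.1 p.2 * motiv αm αd p.1 (B₁ p.2))
      (Icc (0 : ℝ) 1 ×ˢ Icc (0 : ℝ) 1) volume)
    (hint2 : IntegrableOn (fun p : ℝ × ℝ => f p.1 p.2 * motiv αm αd p.1 (B₂ p.2))
      (Icc (0 : ℝ) 1 ×ˢ Icc (0 : ℝ) 1) volume)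
    (hint3 : IntegrableOn (fun p : ℝ × ℝ => f p.1 p.2 * |p.1 - B₁ p.2|)
      (Icc (0 : ℝ) 1 ×ˢ Icc (0 : ℝ) 1) volume)
    (hint4 : IntegrableOn (fun p : ℝ × ℝ => f p.1 p.2 * |p.1 - B₂ p.2|)
      (Icc (0 : ℝ) 1 ×ˢ Icc (0 : ℝ) 1) volume) :
    (∫ p in Icc (0 : ℝ) 1 ×ˢ Icc (0 : ℝ) 1, f p.1 p.2 * motiv αm αd p.1 (B₁ p.2)) =
      ∫ p in Icc (0 : ℝ) 1 ×ˢ Icc (0 : ℝ) 1, f p.1 p.2 * motiv αm αd p.1 (B₂ p.2) := by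
  subst heq
  set S : Set (ℝ × ℝ) := Icc (0 : ℝ) 1 ×ˢ Icc (0 : ℝ) 1 with hS
  have hSm : MeasurableSet S := (measurableSet_Icc).prod measurableSet_Icc
  -- the difference of the two integrands
  set g : ℝ × ℝ → ℝ := fun p => f p.1 p.2 * αm * (B₁ p.2 - B₂ p.2) with hg
  -- the reflection map
  set T : ℝ × ℝ → ℝ × ℝ := fun p => (1 - p.1, 1 - p.2) with hT
  have hTmp : MeasurePreserving T volume volume := by
    have := (Measure.measurePreserving_sub_left (volume : Measure ℝ) 1).prod
      (Measure.measurePreserving_sub_left (volume : Measure ℝ) 1)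
    exact this
  have hemb : MeasurableEmbedding T := by
    have : T = (MeasurableEquiv.prodCongr (MeasurableEquiv.subLeft (1 : ℝ))
        (MeasurableEquiv.subLeft (1 : ℝ))) := rfl
    rw [this]
    exact MeasurableEquiv.measurableEmbedding _
  have hpre : T ⁻¹' S = S := by
    ext p
    simp only [hS, hT, mem_preimage, mem_prod, mem_Icc]
    constructor <;> intro h <;> constructor <;> constructor <;> linarith [h.1.1, h.1.2, h.2.1, h.2.2]
  -- key: ∫ g over S is zero
  have hzero : (∫ p in S, g p) = 0 := by
    have key := hTmp.setIntegral_preimage_emb hemb g S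
    rw [hpre] at key
    have hneg : ∀ p ∈ S, g (T p) = -g p := by
      rintro ⟨q, s⟩ hp
      obtain ⟨hq, hs⟩ := hp
      simp only [hg, hT]
      rw [← hfsymm q hq s hs, hB₁symm s hs, hB₂symm s hs]
      ring
    rw [setIntegral_congr_fun hSm hneg, integral_neg] at key
    linarith
  -- now conclude
  have h1 : ∀ p ∈ S, f p.1 p.2 * motiv αm αm p.1 (B₁ p.2)
      = f p.1 p.2 * motiv αm αm p.1 (B₂ p.2) + g p := by
    intro p hp
    simp only [hg, motiv_eq]
    ring
  calc (∫ p in S, f p.1 p.2 * motiv αm αm p.1 (B₁ p.2))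
      = ∫ p in S, (f p.1 p.2 * motiv αm αm p.1 (B₂ p.2) + g p) :=
        setIntegral_congr_fun hSm h1
    _ = (∫ p in S, f p.1 p.2 * motiv αm αm p.1 (B₂ p.2)) + ∫ p in S, g p := by
        apply integral_add hint2
        have : g = fun p => (f p.1 p.2 * motiv αm αm p.1 (B₁ p.2))
            - (f p.1 p.2 * motiv αm αm p.1 (B₂ p.2)) := by
          funext p; simp only [hg, motiv_eq]; ring
        rw [this]
        exact hint1.sub hint2
    _ = ∫ p in S, f p.1 p.2 * motiv αm αm p.1 (B₂ p.2) := by rw [hzero, add_zero]
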